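/- Let M be a type and L a group. Let G be the set of bijections Φ : M × L → M × L that are equivariant for the right L-action, i.e. Φ(m, l·l₀) = ( (Φ(m,l)).1 , (Φ(m,l)).2 · l₀ ) for all m ∈ M and l, l₀ ∈ L; then G is a subgroup of the permutation group of M × L, and G is isomorphic, as a group, to the semidirect product (M → L) ⋊_φ Perm(M), where M → L carries pointwise multiplication, Perm(M) is the group of bijections of M, and the action is φ(f)(σ) = σ ∘ f⁻¹. An explicit isomorphism sends the pair (σ, f) to the bijection (m, l) ↦ ( f(m), σ(f(m)) · l ). -/

import Mathlib

theorem Equiv.Perm.apply_inv_self {α : Type*} (f : Equiv.Perm α) (x : α) : f (f⁻¹ x) = x :=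
  Equiv.apply_symm_apply f x

theorem Equiv.Perm.inv_apply_self {α : Type*} (f : Equiv.Perm α) (x : α) : f⁻¹ (f x) = x :=
  Equiv.symm_apply_apply f x

section Aux

variable (M L : Type*) [Group L]

/-- The subgroup of right-`L`-equivariant permutations of `M × L`. -/
def gaugeSubgroup : Subgroup (Equiv.Perm (M × L)) where
  carrier := {Φ | ∀ (m : M) (l l₀ : L),
    Φ (m, l * l₀) = ((Φ (m, l)).1, (Φ (m, l)).2 * l₀)}
  one_mem' := by intro m l l₀; rfl
  mul_mem' := by
    intro Φ Ψ hΦ hΨ m l l₀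
    have h1 : (Φ * Ψ) (m, l * l₀) = Φ (Ψ (m, l * l₀)) := rfl
    have h2 : (Φ * Ψ) (m, l) = Φ (Ψ (m, l)) := rfl
    rw [h1, h2, hΨ m l l₀, hΦ (Ψ (m, l)).1 (Ψ (m, l)).2 l₀]
  inv_mem' := by
    intro Φ hΦ m l l₀
    set p := Φ⁻¹ (m, l) with hp
    have hΦp : Φ p = (m, l) := Equiv.Perm.apply_inv_self Φ (m, l)
    have : Φ (p.1, p.2 * l₀) = (m, l * l₀) := by
      have := hΦ p.1 p.2 l₀
      rw [this]
      rw [show ((p.1 : M), (p.2 : L)) = p from rfl, hΦp]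
    rw [Equiv.Perm.inv_def, Equiv.symm_apply_eq]
    exact this.symm

/-- The explicit equivariant permutation attached to `(σ, f)`. -/
def gaugePerm (σ : M → L) (f : Equiv.Perm M) : Equiv.Perm (M × L) where
  toFun p := (f p.1, σ (f p.1) * p.2)
  invFun p := (f⁻¹ p.1, (σ p.1)⁻¹ * p.2)
  left_inv p := by
    simp only [Equiv.Perm.inv_apply_self]
    rw [← mul_assoc, inv_mul_cancel, one_mul]
  right_inv p := by
    simp only [Equiv.Perm.apply_inv_self]
    rw [← mul_assoc, mul_inv_cancel, one_mul]

lemma gaugePerm_mem (σ : M → L) (f : Equiv.Perm M) :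
    gaugePerm M L σ f ∈ gaugeSubgroup M L := by
  intro m l l₀
  show ((f m : M), σ (f m) * (l * l₀)) = _
  simp [gaugePerm, mul_assoc]

end Aux

/-- The group of right-`L`-equivariant bijections of the trivial bundle `M × L` is a
subgroup `G` of `Perm (M × L)`, and `G` is isomorphic to the semidirect product
`(M → L) ⋊[φ] Perm M` (pointwise multiplication on `M → L`, action
`φ(f)(σ) = σ ∘ f⁻¹`), an explicit isomorphism sending `(σ, f)` to
`(m, l) ↦ (f m, σ (f m) * l)`. -/
theorem gauge_group_semidirect (M L : Type*) [Group L]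
    (φ : Equiv.Perm M →* MulAut (M → L))
    (hφ : ∀ (f : Equiv.Perm M) (σ : M → L) (m : M), φ f σ m = σ (f⁻¹ m)) :
    ∃ G : Subgroup (Equiv.Perm (M × L)),
      (∀ Φ : Equiv.Perm (M × L), Φ ∈ G ↔
        ∀ (m : M) (l l₀ : L), Φ (m, l * l₀) = ((Φ (m, l)).1, (Φ (m, l)).2 * l₀)) ∧
      ∃ iso : ((M → L) ⋊[φ] Equiv.Perm M) ≃* G,
        ∀ (σ : M → L) (f : Equiv.Perm M) (m : M) (l : L),
          ((iso ⟨σ, f⟩ : G) : Equiv.Perm (M × L)) (m, l) = (f m, σ (f m) * l) := by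
  classical
  refine ⟨gaugeSubgroup M L, fun Φ => Iff.rfl, ?_⟩
  -- the homomorphism into G
  let ψ : ((M → L) ⋊[φ] Equiv.Perm M) →* (gaugeSubgroup M L) :=
  { toFun := fun x => ⟨gaugePerm M L x.left x.right, gaugePerm_mem M L x.left x.right⟩
    map_one' := by
      ext p
      · rfl
      · show (1 : M → L) _ * p.2 = p.2
        simp
    map_mul' := by
      intro a b
      ext p
      · rfl
      · show (a.left * φ a.right b.left) ((a.right * b.right) p.1) *
            p.2 = _
        show a.left ((a.right * b.right) p.1) *
            (φ a.right b.left) ((a.right * b.right) p.1) * p.2 = _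
        rw [hφ]
        show _ = a.left (a.right (b.right p.1)) *
            (b.left (b.right p.1) * p.2)
        have : ((a.right * b.right : Equiv.Perm M) p.1) = a.right (b.right p.1) := rfl
        rw [this]
        rw [Equiv.Perm.inv_apply_self]
        rw [mul_assoc] }
  have hinj : Function.Injective ψ := by
    intro a b hab
    have hab' : ∀ p : M × L, gaugePerm M L a.left a.right p =
        gaugePerm M L b.left b.right p := by
      intro p
      exact Equiv.ext_iff.mp (congrArg Subtype.val hab) p
    have hfst : ∀ m : M, a.right m = b.right m := fun m =>
      congrArg Prod.fst (hab' (m, 1))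
    have hr : a.right = b.right := Equiv.ext hfst
    have hl : a.left = b.left := by
      funext m
      have := congrArg Prod.snd (hab' (a.right⁻¹ m, 1))
      simp only [gaugePerm, Equiv.coe_fn_mk, mul_one] at this
      rwa [Equiv.Perm.apply_inv_self, hr, ← hr, Equiv.Perm.apply_inv_self] at this
    cases a; cases b
    simp_all
  have hsurj : Function.Surjective ψ := by
    rintro ⟨Φ, hΦ⟩
    -- build f from Φ
    have hΦinv := (gaugeSubgroup M L).inv_mem hΦ
    let f : Equiv.Perm M :=
    { toFun := fun m => (Φ (m, 1)).1
      invFun := fun m => (Φ⁻¹ (m, 1)).1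
      left_inv := by
        intro m
        have h1 : Φ⁻¹ (Φ (m, 1)) = (m, 1) := Equiv.Perm.inv_apply_self Φ (m, 1)
        have h2 := hΦinv (Φ (m, 1)).1 1 (Φ (m, 1)).2
        rw [one_mul] at h2
        have h3 : ((Φ (m,1)).1, (Φ (m,1)).2) = Φ (m,1) := rfl
        rw [h3, h1] at h2
        exact (congrArg Prod.fst h2).symm
      right_inv := by
        intro m
        have h1 : Φ (Φ⁻¹ (m, 1)) = (m, 1) := Equiv.Perm.apply_inv_self Φ (m, 1)
        have h2 := hΦ (Φ⁻¹ (m, 1)).1 1 (Φ⁻¹ (m, 1)).2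
        rw [one_mul] at h2
        have h3 : ((Φ⁻¹ (m,1)).1, (Φ⁻¹ (m,1)).2) = Φ⁻¹ (m,1) := rfl
        rw [h3, h1] at h2
        exact (congrArg Prod.fst h2).symm }
    let σ : M → L := fun m => (Φ (f⁻¹ m, 1)).2
    refine ⟨⟨σ, f⟩, ?_⟩
    apply Subtype.ext
    apply Equiv.ext
    rintro ⟨m, l⟩
    show ((f m : M), σ (f m) * l) = Φ (m, l)
    have hσ : σ (f m) = (Φ (m, 1)).2 := by
      show (Φ ((f⁻¹ (f m) : M), 1)).2 = _
      rw [Equiv.Perm.inv_apply_self]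
    have hf : (f m : M) = (Φ (m, 1)).1 := rfl
    have := hΦ m 1 l
    rw [one_mul] at this
    rw [this, ← hf, hσ, hf]
  refine ⟨MulEquiv.ofBijective ψ ⟨hinj, hsurj⟩, ?_⟩
  intro σ f m l
  rfl
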